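/- (Local injectivity.) Let X, Y be Fréchet spaces, U ⊆ X open and convex, and f : U → Y a C¹ function (directionally differentiable with derivative f'(x)(h) jointly continuous, hence linear in h). Suppose there exist constants cₙ > 0 with ‖h‖ₙ ≤ cₙ‖f'(x)(h)‖ₙ for all n ≥ 0, x ∈ U, h ∈ X, and constants cₙ' > 0 and an index r ≥ 0 with ‖f'(x)(h) − f'(z)(h)‖ₙ ≤ cₙ'[‖x−z‖_r ‖h‖ₙ + ‖x−z‖ₙ ‖h‖_r] for all n ≥ 0, x, z ∈ U, h ∈ X. Then f is locally injective on U: every point of U has a neighbourhood on which f is injective. -/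

import Mathlib

open Filter Topology Set

noncomputable section

/-- Directional derivative: `f'(x,h) = lim_{t↓0} (f(x+th) - f(x))/t`. -/
def HasDirDeriv {X Y : Type*} [AddCommGroup X] [Module ℝ X]
    [AddCommGroup Y] [Module ℝ Y] [TopologicalSpace Y]
    (f : X → Y) (x h : X) (v : Y) : Prop :=
  Filter.Tendsto (fun t : ℝ => t⁻¹ • (f (x + t • h) - f x)) (𝓝[>] (0:ℝ)) (𝓝 v)

/-- monotonicity of t ↦ t/(1+t) on nonneg reals -/
lemma frac_mono {a b : ℝ} (ha : 0 ≤ a) (hab : a ≤ b) : a / (1 + a) ≤ b / (1 + b) := by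
  have hb : 0 ≤ b := ha.trans hab
  rw [div_le_div_iff₀ (by linarith) (by linarith)]
  nlinarith

lemma frac_le_one {a : ℝ} (ha : 0 ≤ a) : a / (1 + a) ≤ 1 := by
  rw [div_le_one (by linarith)]; linarith

/-- Hahn-Banach for a seminorm -/
lemma exists_dual {Y : Type*} [AddCommGroup Y] [Module ℝ Y] (q : Seminorm ℝ Y) (y : Y) :
    ∃ g : Y →ₗ[ℝ] ℝ, g y = q y ∧ ∀ w, |g w| ≤ q w := by
  rcases eq_or_ne y 0 with rfl | hy
  · exact ⟨0, by simp, fun w => by simp [apply_nonneg]⟩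
  have hfle : ∀ x : (LinearPMap.mkSpanSingleton (K := ℝ) (L := ℝ) (σ := RingHom.id ℝ) y (q y : ℝ) hy).domain,
      (LinearPMap.mkSpanSingleton (K := ℝ) (L := ℝ) (σ := RingHom.id ℝ) y (q y : ℝ) hy) x ≤ q x := by
    rintro ⟨w, hw⟩
    obtain ⟨d, rfl⟩ := Submodule.mem_span_singleton.1 hw
    have h1 : (LinearPMap.mkSpanSingleton (K := ℝ) (L := ℝ) (σ := RingHom.id ℝ) y (q y : ℝ) hy) ⟨d • y, hw⟩ = d • (q y : ℝ) :=
      LinearPMap.mkSpanSingleton'_apply y (q y : ℝ) _ d hw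
    rw [h1]
    have h2 : q (d • y) = |d| * q y := by
      rw [map_smul_eq_mul]; rw [Real.norm_eq_abs]
    simp only [smul_eq_mul]
    rw [h2]
    exact mul_le_mul_of_nonneg_right (le_abs_self d) (apply_nonneg q y)
  obtain ⟨g, hg1, hg2⟩ := exists_extension_of_le_sublinear
      (LinearPMap.mkSpanSingleton (K := ℝ) (L := ℝ) (σ := RingHom.id ℝ) y (q y : ℝ) hy) (fun w => q w)
      (fun c hc x => by
        show q (c • x) = c * q x
        rw [map_smul_eq_mul, Real.norm_eq_abs, abs_of_pos hc])
      (fun a b => map_add_le_add q a b) hfle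
  have hgw : ∀ w, |g w| ≤ q w := by
    intro w
    rw [abs_le]
    refine ⟨?_, hg2 w⟩
    have h3 := hg2 (-w)
    rw [map_neg] at h3
    have h4 : q (-w) = q w := map_neg_eq_map q w
    simp only [h4] at h3
    linarith
  refine ⟨g, ?_, hgw⟩
  have hmem : y ∈ Submodule.span ℝ {y} := Submodule.mem_span_singleton_self y
  have h5 := hg1 ⟨y, hmem⟩
  rw [LinearPMap.mkSpanSingleton_apply ℝ ℝ hy] at h5
  exact h5

section MetricLemmas
variable {Y : Type*} [AddCommGroup Y] [Module ℝ Y] [MetricSpace Y]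
  (q : ℕ → Seminorm ℝ Y)
  (hdist : ∀ u v : Y, dist u v = ⨆ n : ℕ, (2:ℝ)⁻¹ ^ n * q n (u - v) / (1 + q n (u - v)))

include hdist

lemma bdd_terms (u v : Y) : BddAbove (Set.range fun n : ℕ =>
    (2:ℝ)⁻¹ ^ n * q n (u - v) / (1 + q n (u - v))) := by
  refine ⟨1, ?_⟩
  rintro _ ⟨n, rfl⟩
  have h1 : ((2:ℝ)⁻¹) ^ n ≤ 1 := pow_le_one₀ (by norm_num) (by norm_num)
  have h2 : q n (u - v) / (1 + q n (u - v)) ≤ 1 := frac_le_one (apply_nonneg _ _)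
  have h0 : (0:ℝ) ≤ (2:ℝ)⁻¹ ^ n := by positivity
  calc (2:ℝ)⁻¹ ^ n * q n (u - v) / (1 + q n (u - v))
      = (2:ℝ)⁻¹ ^ n * (q n (u - v) / (1 + q n (u - v))) := by ring
    _ ≤ 1 * 1 := mul_le_mul h1 h2 (by positivity) (by norm_num)
    _ = 1 := by norm_num

lemma seminorm_lt_of_dist_lt (n : ℕ) {u v : Y} {ε : ℝ} (hε : 0 < ε)
    (hd : dist u v < (2:ℝ)⁻¹ ^ n * ε / (1 + ε)) : q n (u - v) < ε := by
  by_contra hcon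
  push_neg at hcon
  have hterm : (2:ℝ)⁻¹ ^ n * ε / (1 + ε) ≤
      (2:ℝ)⁻¹ ^ n * q n (u - v) / (1 + q n (u - v)) := by
    have := frac_mono hε.le hcon
    have h0 : (0:ℝ) ≤ (2:ℝ)⁻¹ ^ n := by positivity
    calc (2:ℝ)⁻¹ ^ n * ε / (1 + ε) = (2:ℝ)⁻¹ ^ n * (ε / (1 + ε)) := by ring
      _ ≤ (2:ℝ)⁻¹ ^ n * (q n (u - v) / (1 + q n (u - v))) :=
          mul_le_mul_of_nonneg_left this h0
      _ = (2:ℝ)⁻¹ ^ n * q n (u - v) / (1 + q n (u - v)) := by ring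
  have hle : (2:ℝ)⁻¹ ^ n * q n (u - v) / (1 + q n (u - v)) ≤ dist u v := by
    rw [hdist]
    exact le_ciSup (bdd_terms q hdist u v) n
  linarith

lemma dist_eq_zero_of_seminorms {u v : Y} (h : ∀ n, q n (u - v) = 0) : u = v := by
  have : dist u v = 0 := by
    rw [hdist]
    have : ∀ n : ℕ, (2:ℝ)⁻¹ ^ n * q n (u - v) / (1 + q n (u - v)) = 0 := by
      intro n; rw [h n]; simp
    simp only [this]
    exact ciSup_const
  exact eq_of_dist_eq_zero this

/-- continuity of t ↦ u + t • h -/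
lemma path_continuous (u h : Y) : Continuous (fun t : ℝ => u + t • h) := by
  rw [Metric.continuous_iff]
  intro t ε hε
  obtain ⟨N, hN⟩ : ∃ N : ℕ, (2:ℝ)⁻¹ ^ N < ε / 2 := by
    refine exists_pow_lt_of_lt_one (by linarith) (by norm_num)
  set M : ℝ := ∑ n ∈ Finset.range N, q n h with hM
  have hMnn : ∀ n < N, q n h ≤ M := by
    intro n hn
    exact Finset.single_le_sum (f := fun n => q n h) (fun i _ => apply_nonneg _ _)
      (Finset.mem_range.2 hn)
  have hM0 : 0 ≤ M := Finset.sum_nonneg fun i _ => apply_nonneg _ _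
  refine ⟨(ε / 2) / (1 + M), by positivity, fun s hs => ?_⟩
  have key : dist (u + s • h) (u + t • h) ≤ ε / 2 := by
    rw [hdist]
    refine Real.iSup_le (fun n => ?_) (by linarith)
    have hw : (u + s • h) - (u + t • h) = (s - t) • h := by
      rw [sub_smul]; abel
    rw [hw]
    have hq : q n ((s - t) • h) = |s - t| * q n h := by
      rw [map_smul_eq_mul, Real.norm_eq_abs]
    have ha0 : (0:ℝ) ≤ q n ((s - t) • h) := apply_nonneg _ _
    rcases lt_or_ge n N with hn | hn
    · have hst : |s - t| < (ε / 2) / (1 + M) := by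
        rw [← Real.dist_eq]; exact hs
      have hble : q n ((s - t) • h) ≤ ε / 2 := by
        rw [hq]
        calc |s - t| * q n h ≤ (ε / 2) / (1 + M) * M :=
              mul_le_mul hst.le (hMnn n hn) (apply_nonneg _ _) (by positivity)
          _ ≤ ε / 2 := by
              rw [div_mul_eq_mul_div, div_le_iff₀ (by linarith)]
              nlinarith
      set a : ℝ := q n ((s - t) • h) with ha
      calc (2:ℝ)⁻¹ ^ n * a / (1 + a) = (2:ℝ)⁻¹ ^ n * (a / (1 + a)) := by ring
        _ ≤ 1 * (a / (1 + a)) := by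
            refine mul_le_mul_of_nonneg_right (pow_le_one₀ (by norm_num) (by norm_num)) ?_
            positivity
        _ = a / (1 + a) := one_mul _
        _ ≤ a := by
            rw [div_le_iff₀ (by linarith)]; nlinarith
        _ ≤ ε / 2 := hble
    · have h1 : (2:ℝ)⁻¹ ^ n ≤ (2:ℝ)⁻¹ ^ N :=
        pow_le_pow_of_le_one (by norm_num) (by norm_num) hn
      set a : ℝ := q n ((s - t) • h) with ha
      calc (2:ℝ)⁻¹ ^ n * a / (1 + a) = (2:ℝ)⁻¹ ^ n * (a / (1 + a)) := by ring
        _ ≤ (2:ℝ)⁻¹ ^ N * 1 := by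
            refine mul_le_mul h1 (frac_le_one ha0) (by positivity) (by positivity)
        _ ≤ ε / 2 := by rw [mul_one]; exact hN.le
  linarith

/-- continuity of any linear functional dominated by a seminorm -/
lemma dominated_continuous (n : ℕ) (g : Y →ₗ[ℝ] ℝ) (hg : ∀ w, |g w| ≤ q n w) :
    Continuous g := by
  rw [Metric.continuous_iff]
  intro u ε hε
  refine ⟨(2:ℝ)⁻¹ ^ n * ε / (1 + ε), by positivity, fun v hv => ?_⟩
  have := seminorm_lt_of_dist_lt q hdist n hε hv
  have h2 : |g v - g u| ≤ q n (v - u) := by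
    rw [← map_sub]; exact hg _
  rw [Real.dist_eq]
  linarith

end MetricLemmas

lemma key_estimate {X Y : Type*}
    [AddCommGroup X] [Module ℝ X] [MetricSpace X]
    [AddCommGroup Y] [Module ℝ Y] [MetricSpace Y]
    (p : ℕ → Seminorm ℝ X) (q : ℕ → Seminorm ℝ Y)
    (hdistX : ∀ x y : X,
      dist x y = ⨆ n : ℕ, (2:ℝ)⁻¹ ^ n * p n (x - y) / (1 + p n (x - y)))
    (hdistY : ∀ u v : Y,
      dist u v = ⨆ n : ℕ, (2:ℝ)⁻¹ ^ n * q n (u - v) / (1 + q n (u - v)))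
    (U : Set X) (hconv : Convex ℝ U)
    (f : X → Y) (hf : ContinuousOn f U)
    (f' : X → X →ₗ[ℝ] Y)
    (hderiv : ∀ x ∈ U, ∀ h : X, HasDirDeriv f x h (f' x h))
    (c' : ℕ → ℝ) (hc' : ∀ n, 0 < c' n) (r : ℕ)
    (heqq2 : ∀ n : ℕ, ∀ x ∈ U, ∀ z ∈ U, ∀ h : X,
      q n (f' x h - f' z h) ≤ c' n * (p r (x - z) * p n h + p n (x - z) * p r h))
    {z x : X} (hz : z ∈ U) (hx : x ∈ U) (hfeq : f x = f z) (n : ℕ) :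
    q n (f' z (x - z)) ≤ 2 * c' n * p r (x - z) * p n (x - z) := by
  set h : X := x - z with hh
  obtain ⟨g, hgy, hgle⟩ := exists_dual (q n) (f' z h)
  have hgc : Continuous g := dominated_continuous q hdistY n g hgle
  have hseg : ∀ s ∈ Icc (0:ℝ) 1, z + s • h ∈ U := by
    intro s hs
    have := hconv hz hx (by linarith [hs.2] : (0:ℝ) ≤ 1 - s) hs.1 (by ring)
    have heq : (1 - s) • z + s • x = z + s • h := by
      rw [hh]; module
    rwa [heq] at this
  set χ : ℝ → ℝ := fun t => g (f (z + t • h)) with hχ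
  set K : ℝ := g (f' z h) with hK
  set ψ : ℝ → ℝ := fun t => χ t - t * K with hψ
  set C : ℝ := 2 * c' n * p r h * p n h with hC
  -- continuity of ψ on [0,1]
  have hpath : Continuous (fun t : ℝ => z + t • h) := path_continuous p hdistX z h
  have hχcont : ContinuousOn χ (Icc 0 1) :=
    hgc.comp_continuousOn (hf.comp hpath.continuousOn hseg)
  have hψcont : ContinuousOn ψ (Icc 0 1) :=
    hχcont.sub ((continuous_id.mul continuous_const).continuousOn)
  -- right derivative of ψ
  have hψderiv : ∀ s ∈ Ico (0:ℝ) 1,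
      HasDerivWithinAt ψ (g (f' (z + s • h) h) - K) (Ici s) s := by
    intro s hs
    have hw : z + s • h ∈ U := hseg s ⟨hs.1, hs.2.le⟩
    have hdd := hderiv (z + s • h) hw h
    have htend := (hgc.tendsto _).comp hdd
    have heqfun : ∀ t : ℝ, g (t⁻¹ • (f (z + s • h + t • h) - f (z + s • h)))
        = t⁻¹ * (χ (s + t) - χ s) := by
      intro t
      have h1 : z + s • h + t • h = z + (s + t) • h := by
        rw [add_smul]; abel
      rw [h1, map_smul, map_sub]
      rfl
    have htend2 : Tendsto (fun t : ℝ => t⁻¹ * (χ (s + t) - χ s)) (𝓝[>] (0:ℝ))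
        (𝓝 (g (f' (z + s • h) h))) := by
      have : (fun t : ℝ => t⁻¹ * (χ (s + t) - χ s))
          = fun t => g (t⁻¹ • (f (z + s • h + t • h) - f (z + s • h))) := by
        funext t; rw [heqfun t]
      rw [this]
      exact htend
    have hmap : Tendsto (fun y : ℝ => y - s) (𝓝[Ioi s] s) (𝓝[Ioi (0:ℝ)] 0) := by
      apply tendsto_nhdsWithin_of_tendsto_nhds_of_eventually_within
      · have : Tendsto (fun y : ℝ => y - s) (𝓝 s) (𝓝 (s - s)) :=
          (continuous_id.sub continuous_const).tendsto s
        rw [sub_self] at this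
        exact this.mono_left nhdsWithin_le_nhds
      · filter_upwards [self_mem_nhdsWithin] with y hy
        exact sub_pos.2 (mem_Ioi.1 hy)
    have hχd : HasDerivWithinAt χ (g (f' (z + s • h) h)) (Ioi s) s := by
      rw [hasDerivWithinAt_iff_tendsto_slope' (notMem_Ioi.2 le_rfl)]
      have hcomp := htend2.comp hmap
      have : slope χ s = (fun t : ℝ => t⁻¹ * (χ (s + t) - χ s)) ∘ (fun y : ℝ => y - s) := by
        funext y
        simp only [Function.comp_apply, slope_def_field]
        rw [show s + (y - s) = y by ring]
        rw [div_eq_inv_mul]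
      rw [this]
      exact hcomp
    have hid : HasDerivWithinAt (fun t : ℝ => t * K) K (Ioi s) s := by
      simpa using (hasDerivWithinAt_id s (Ioi s)).mul_const K
    exact (hχd.sub hid).Ici_of_Ioi
  -- bound on the derivative
  have hbound : ∀ s ∈ Ico (0:ℝ) 1, ‖g (f' (z + s • h) h) - K‖ ≤ C := by
    intro s hs
    have hw : z + s • h ∈ U := hseg s ⟨hs.1, hs.2.le⟩
    have h1 : g (f' (z + s • h) h) - K = g (f' (z + s • h) h - f' z h) := by
      rw [hK, ← map_sub]
    rw [h1, Real.norm_eq_abs]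
    refine (hgle _).trans ?_
    have h2 := heqq2 n (z + s • h) hw z hz h
    have h3 : z + s • h - z = s • h := by abel
    rw [h3] at h2
    have hpr : p r (s • h) ≤ p r h := by
      rw [map_smul_eq_mul, Real.norm_eq_abs, abs_of_nonneg hs.1]
      nlinarith [apply_nonneg (p r) h, hs.2]
    have hpn : p n (s • h) ≤ p n h := by
      rw [map_smul_eq_mul, Real.norm_eq_abs, abs_of_nonneg hs.1]
      nlinarith [apply_nonneg (p n) h, hs.2]
    have hcn : (0:ℝ) ≤ c' n := (hc' n).le
    calc q n (f' (z + s • h) h - f' z h)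
        ≤ c' n * (p r (s • h) * p n h + p n (s • h) * p r h) := h2
      _ ≤ c' n * (p r h * p n h + p n h * p r h) := by
          refine mul_le_mul_of_nonneg_left ?_ hcn
          have := apply_nonneg (p n) h
          have := apply_nonneg (p r) h
          nlinarith
      _ = C := by rw [hC]; ring
  -- mean value inequality
  have hmvt := norm_image_sub_le_of_norm_deriv_right_le_segment hψcont hψderiv hbound 1
    (right_mem_Icc.2 zero_le_one)
  have hψ0 : ψ 0 = g (f z) := by
    simp only [hψ, hχ, zero_smul, add_zero, zero_mul, sub_zero]
  have hψ1 : ψ 1 = g (f z) - K := by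
    have hx1 : z + (1:ℝ) • h = x := by rw [one_smul, hh]; abel
    simp only [hψ, hχ, hx1, hfeq, one_mul]
  rw [hψ1, hψ0] at hmvt
  have : ‖g (f z) - K - g (f z)‖ = |K| := by
    rw [show g (f z) - K - g (f z) = -K by ring, norm_neg, Real.norm_eq_abs]
  rw [this] at hmvt
  have hKnn : 0 ≤ K := by rw [hgy]; exact apply_nonneg _ _
  rw [abs_of_nonneg hKnn] at hmvt
  rw [← hgy, hK]
  linarith

theorem stmt13 {X Y : Type*}
    [AddCommGroup X] [Module ℝ X] [MetricSpace X] [CompleteSpace X]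
    [AddCommGroup Y] [Module ℝ Y] [MetricSpace Y] [CompleteSpace Y]
    (p : ℕ → Seminorm ℝ X) (q : ℕ → Seminorm ℝ Y)
    (hdistX : ∀ x y : X,
      dist x y = ⨆ n : ℕ, (2:ℝ)⁻¹ ^ n * p n (x - y) / (1 + p n (x - y)))
    (hdistY : ∀ u v : Y,
      dist u v = ⨆ n : ℕ, (2:ℝ)⁻¹ ^ n * q n (u - v) / (1 + q n (u - v)))
    (U : Set X) (hU : IsOpen U) (hconv : Convex ℝ U)
    (f : X → Y) (hf : ContinuousOn f U)
    -- f ∈ C¹(U): the derivative f'(x) is linear in the direction and jointly continuous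
    (f' : X → X →ₗ[ℝ] Y)
    (hderiv : ∀ x ∈ U, ∀ h : X, HasDirDeriv f x h (f' x h))
    (hjoint : ContinuousOn (fun z : X × X => f' z.1 z.2) (U ×ˢ Set.univ))
    (c : ℕ → ℝ) (hc : ∀ n, 0 < c n)
    (heqq1 : ∀ n : ℕ, ∀ x ∈ U, ∀ h : X, p n h ≤ c n * q n (f' x h))
    (c' : ℕ → ℝ) (hc' : ∀ n, 0 < c' n) (r : ℕ)
    (heqq2 : ∀ n : ℕ, ∀ x ∈ U, ∀ z ∈ U, ∀ h : X,
      q n (f' x h - f' z h) ≤ c' n * (p r (x - z) * p n h + p n (x - z) * p r h)) :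
    ∀ x ∈ U, ∃ W : Set X, IsOpen W ∧ x ∈ W ∧ Set.InjOn f (U ∩ W) := by
  intro x₀ hx₀
  set εr : ℝ := 1 / (2 * c r * c' r) with hεr
  have hεrpos : 0 < εr := by
    have h1 := hc r
    have h2 := hc' r
    rw [hεr]; positivity
  set ρ : ℝ := ((2:ℝ)⁻¹ ^ r * εr / (1 + εr)) / 2 with hρ
  have hρpos : 0 < ρ := by
    rw [hρ]
    have : (0:ℝ) < 1 + εr := by linarith
    positivity
  refine ⟨Metric.ball x₀ ρ, Metric.isOpen_ball, Metric.mem_ball_self hρpos, ?_⟩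
  rintro x ⟨hxU, hxW⟩ z ⟨hzU, hzW⟩ hfeq
  -- p r (x - z) < εr
  have hdxz : dist x z < (2:ℝ)⁻¹ ^ r * εr / (1 + εr) := by
    calc dist x z ≤ dist x x₀ + dist x₀ z := dist_triangle x x₀ z
      _ < ρ + ρ := by
          have h1 : dist x x₀ < ρ := hxW
          have h2 : dist x₀ z < ρ := by rw [dist_comm]; exact hzW
          linarith
      _ = (2:ℝ)⁻¹ ^ r * εr / (1 + εr) := by rw [hρ]; ring
  have hpr_lt : p r (x - z) < εr := seminorm_lt_of_dist_lt p hdistX r hεrpos hdxz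
  -- key estimate available for all n
  have hkey : ∀ n, q n (f' z (x - z)) ≤ 2 * c' n * p r (x - z) * p n (x - z) :=
    fun n => key_estimate p q hdistX hdistY U hconv f hf f' hderiv c' hc' r heqq2
      hzU hxU hfeq n
  -- chain: p n (x-z) ≤ c n * q n (f' z (x-z)) ≤ 2 c n c' n p r (x-z) p n (x-z)
  have hchain : ∀ n, p n (x - z) ≤ 2 * c n * c' n * p r (x - z) * p n (x - z) := by
    intro n
    calc p n (x - z) ≤ c n * q n (f' z (x - z)) := heqq1 n z hzU (x - z)
      _ ≤ c n * (2 * c' n * p r (x - z) * p n (x - z)) :=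
          mul_le_mul_of_nonneg_left (hkey n) (hc n).le
      _ = 2 * c n * c' n * p r (x - z) * p n (x - z) := by ring
  -- first: p r (x - z) = 0
  have hpr0 : p r (x - z) = 0 := by
    by_contra hne
    have hpos : 0 < p r (x - z) := lt_of_le_of_ne (apply_nonneg _ _) (Ne.symm hne)
    have := hchain r
    have hcr := hc r
    have hc'r := hc' r
    rw [hεr] at hpr_lt
    have hd : (0:ℝ) < 2 * c r * c' r := by positivity
    have h2 : 2 * c r * c' r * p r (x - z) < 1 := by
      have h3 := (lt_div_iff₀ hd).mp hpr_lt
      linarith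
    nlinarith [mul_lt_mul_of_pos_right h2 hpos]
  -- then all p n (x - z) = 0
  have hall : ∀ n, p n (x - z) = 0 := by
    intro n
    have := hchain n
    rw [hpr0] at this
    have h0 : p n (x - z) ≤ 0 := by linarith [this]
    exact le_antisymm h0 (apply_nonneg _ _)
  exact dist_eq_zero_of_seminorms p hdistX hall
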